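/- (Refined Descartes rule for real-rooted polynomials) If p(x) ∈ ℝ[x] is a nonzero polynomial all of whose complex roots are real, then the number of sign changes ν in the sequence of its nonzero coefficients (in decreasing order of degree) equals exactly the number of positive real roots of p, counted with multiplicity. -/

import Mathlib

open Polynomial

/-- Number of sign changes in a list of real numbers. -/
noncomputable def signChangesList : List ℝ → ℕ
  | a :: b :: t => (if a * b < 0 then 1 else 0) + signChangesList (b :: t)
  | _ => 0

/-- Number of sign changes in the sequence of nonzero coefficients of a real
polynomial, listed in decreasing order of degree. -/
noncomputable def signChanges (p : Polynomial ℝ) : ℕ :=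
  signChangesList ((((List.range (p.natDegree + 1)).reverse).map p.coeff).filter
    (fun x => x ≠ 0))

section Aux


lemma scl_nil : signChangesList [] = 0 := rfl
lemma scl_single (a : ℝ) : signChangesList [a] = 0 := rfl
lemma scl_cons_cons (a b : ℝ) (t : List ℝ) :
    signChangesList (a :: b :: t) = (if a * b < 0 then 1 else 0) + signChangesList (b :: t) := rfl

/-- sign transitivity helpers -/
lemma sgn_helper1 {a b c : ℝ} (h1 : 0 < a * b) (h2 : a * c < 0) : b * c < 0 := by
  have ha : a ≠ 0 := by rintro rfl; simp at h2
  have ha2 : 0 < a * a := mul_self_pos.mpr ha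
  nlinarith [mul_pos h1 (neg_pos.mpr h2)]

lemma sgn_helper2 {a b c : ℝ} (h1 : a * b < 0) (h2 : a * c < 0) : 0 < b * c := by
  have ha : a ≠ 0 := by rintro rfl; simp at h2
  have ha2 : 0 < a * a := mul_self_pos.mpr ha
  nlinarith [mul_pos (neg_pos.mpr h1) (neg_pos.mpr h2)]

lemma scl_cons_le (prev b : ℝ) (hp : prev ≠ 0) (hb : b ≠ 0) (w : List ℝ) :
    signChangesList (prev :: w) ≤ signChangesList (prev :: b :: w) := by
  cases w with
  | nil => simp [scl_single, scl_cons_cons]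
  | cons h t =>
    rw [scl_cons_cons, scl_cons_cons, scl_cons_cons]
    rcases lt_trichotomy (prev * b) 0 with hc | hc | hc
    · split_ifs <;> omega
    · exact absurd (mul_eq_zero.mp hc) (by tauto)
    · have himp : prev * h < 0 → b * h < 0 := fun hph => sgn_helper1 hc hph
      split_ifs with h1 h2 h3 <;> first | omega | (exfalso; tauto)

lemma scl_alt_sublist_aux : ∀ (w : List ℝ), (∀ x ∈ w, x ≠ 0) → ∀ (prev : ℝ), prev ≠ 0 →
    ∀ (s : List ℝ), s.Sublist w → s.Chain' (fun x y => x * y < 0) →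
    (s = [] ∨ prev * s.headI < 0) → s.length ≤ signChangesList (prev :: w)
  | [], _, prev, _, s, hs, _, _ => by
      simp [List.sublist_nil.mp hs]
  | b :: wt, hw, prev, hprev, s, hs, hchain, hhead => by
      have hb : b ≠ 0 := hw b (by simp)
      have hwt : ∀ x ∈ wt, x ≠ 0 := fun x hx => hw x (by simp [hx])
      cases hs with
      | cons _ hsub =>
          calc s.length ≤ signChangesList (prev :: wt) :=
                scl_alt_sublist_aux wt hwt prev hprev s hsub hchain hhead
            _ ≤ signChangesList (prev :: b :: wt) := scl_cons_le prev b hprev hb wt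
      | cons_cons st hsub =>
          rename_i stail
          -- here s = b :: stail, hsub : stail.Sublist wt
          rcases hhead with h | h
          · simp at h
          · simp only [List.headI] at h
            rw [scl_cons_cons, if_pos h]
            have hch2 : stail.Chain' (fun x y => x * y < 0) := hchain.tail
            have hh2 : stail = [] ∨ b * stail.headI < 0 := by
              cases stail with
              | nil => left; rfl
              | cons c t => right; exact (List.isChain_cons_cons.mp hchain).1
            have := scl_alt_sublist_aux wt hwt b hb stail hsub hch2 hh2
            simp only [List.length_cons]
            omega

lemma scl_alt_sublist (w : List ℝ) (hw : ∀ x ∈ w, x ≠ 0) (s : List ℝ)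
    (hs : s.Sublist w) (hchain : s.Chain' (fun x y => x * y < 0)) :
    s.length ≤ signChangesList w + 1 := by
  cases s with
  | nil => simp
  | cons a s2 =>
    have ha : a ≠ 0 := hw a (hs.subset (by simp))
    have h1 := scl_alt_sublist_aux w hw (-a) (neg_ne_zero.mpr ha) (a :: s2) hs hchain
      (Or.inr (by simp only [List.headI]; nlinarith [mul_self_pos.mpr ha]))
    cases w with
    | nil => simp at hs
    | cons b w2 =>
      rw [scl_cons_cons] at h1
      split_ifs at h1 <;> omega

lemma scl_exists_alt : ∀ (w : List ℝ), (∀ x ∈ w, x ≠ 0) → w ≠ [] →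
    ∃ s : List ℝ, s.Sublist w ∧ s.Chain' (fun x y => x * y < 0) ∧
      s.headI = w.headI ∧ s ≠ [] ∧ s.length = signChangesList w + 1
  | [], _, hne => absurd rfl hne
  | [b], hw, _ => ⟨[b], by simp, List.isChain_singleton b, rfl, by simp, by simp [scl_single]⟩
  | b :: x :: t, hw, _ => by
      have hb : b ≠ 0 := hw b (by simp)
      have hx : x ≠ 0 := hw x (by simp)
      obtain ⟨s2, hsub, hchain, hhead, hne, hlen⟩ :=
        scl_exists_alt (x :: t) (fun y hy => hw y (by simp [hy])) (by simp)
      obtain ⟨s3, rfl⟩ : ∃ s3, s2 = x :: s3 := by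
        cases s2 with
        | nil => exact absurd rfl hne
        | cons c cs => exact ⟨cs, by simp_all [List.headI]⟩
      by_cases hsgn : b * x < 0
      · refine ⟨b :: x :: s3, hsub.cons₂ b, List.isChain_cons_cons.mpr ⟨hsgn, hchain⟩, rfl, by simp, ?_⟩
        rw [scl_cons_cons, if_pos hsgn]
        simp only [List.length_cons] at hlen ⊢
        omega
      · have hbx : 0 < b * x := lt_of_le_of_ne (not_lt.mp hsgn)
          (fun h => by rcases mul_eq_zero.mp h.symm with h | h <;> tauto)
        have hsub3 : s3.Sublist (x :: t) :=
          (List.cons_sublist_cons.mp hsub).trans (List.sublist_cons_self x t)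
        refine ⟨b :: s3, hsub3.cons₂ b, ?_, rfl, by simp, ?_⟩
        · cases s3 with
          | nil => exact List.isChain_singleton b
          | cons c cs =>
            have hxc : x * c < 0 := (List.isChain_cons_cons.mp hchain).1
            exact List.isChain_cons_cons.mpr ⟨sgn_helper1 (by linarith [mul_comm b x] : (0:ℝ) < x * b) hxc, hchain.tail⟩
        · rw [scl_cons_cons, if_neg hsgn]
          simp only [List.length_cons] at hlen ⊢
          omega

lemma scl_le_length : ∀ (l : List ℝ), signChangesList l ≤ l.length - 1
  | [] => by simp [scl_nil]
  | [a] => by simp [scl_single]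
  | a :: b :: t => by
      rw [scl_cons_cons]
      have := scl_le_length (b :: t)
      simp only [List.length_cons] at this ⊢
      split_ifs <;> omega


section Bridge
variable (p : Polynomial ℝ)

/-- BA : any strictly decreasing list of indices with alternating nonzero coefficients
has length at most signChanges p + 1. -/
lemma length_le_signChanges (js : List ℕ) (hdec : js.Chain' (· > ·))
    (hnz : ∀ j ∈ js, p.coeff j ≠ 0)
    (halt : (js.map p.coeff).Chain' (fun x y => x * y < 0)) :
    js.length ≤ signChanges p + 1 := by
  set n := p.natDegree
  set L : List ℝ := ((List.range (n + 1)).reverse).map p.coeff with hL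
  set w : List ℝ := L.filter (fun x => x ≠ 0) with hwdef
  have hw : ∀ x ∈ w, x ≠ 0 := by
    intro x hx
    have := List.mem_filter.mp hx
    simpa using this.2
  -- js is a sublist of (range (n+1)).reverse
  have hjs : js.Sublist ((List.range (n + 1)).reverse) := by
    rw [List.sublist_reverse_iff]
    apply List.sublist_of_subperm_of_pairwise (r := (· ≤ ·))
    · apply List.subperm_of_subset
      · exact List.nodup_reverse.mpr ((List.isChain_iff_pairwise.mp hdec).nodup)
      · intro x hx
        rw [List.mem_reverse] at hx
        rw [List.mem_range]
        have := Polynomial.le_natDegree_of_ne_zero (hnz x hx)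
        omega
    · rw [List.pairwise_reverse]
      exact ((List.isChain_iff_pairwise).mp hdec).imp (fun h => le_of_lt h)
    · exact (List.pairwise_le_range (n := n + 1))
  have hmap : (js.map p.coeff).Sublist L := hjs.map p.coeff
  have hfil : (js.map p.coeff).Sublist w := by
    have : (js.map p.coeff).filter (fun x => x ≠ 0) = js.map p.coeff := by
      apply List.filter_eq_self.mpr
      intro a ha
      obtain ⟨j, hj, rfl⟩ := List.mem_map.mp ha
      simpa using hnz j hj
    rw [hwdef, ← this]
    exact hmap.filter _
  have := scl_alt_sublist w hw (js.map p.coeff) hfil halt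
  rw [signChanges]
  simpa only [List.length_map] using this

/-- BB : existence of a maximal alternating index list. -/
lemma exists_alt_indices (hp : p ≠ 0) :
    ∃ js : List ℕ, js.Chain' (· > ·) ∧ (∀ j ∈ js, p.coeff j ≠ 0) ∧
      (js.map p.coeff).Chain' (fun x y => x * y < 0) ∧
      js.length = signChanges p + 1 := by
  set n := p.natDegree
  set L : List ℝ := ((List.range (n + 1)).reverse).map p.coeff with hL
  set w : List ℝ := L.filter (fun x => x ≠ 0) with hwdef
  have hw : ∀ x ∈ w, x ≠ 0 := by
    intro x hx
    have := List.mem_filter.mp hx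
    simpa using this.2
  have hwne : w ≠ [] := by
    have h1 : p.coeff n ∈ L := by
      rw [hL]
      apply List.mem_map.mpr
      exact ⟨n, by simp, rfl⟩
    have h2 : p.coeff n ∈ w := by
      rw [hwdef]
      apply List.mem_filter.mpr
      refine ⟨h1, ?_⟩
      have hlc : p.leadingCoeff ≠ 0 := Polynomial.leadingCoeff_ne_zero.mpr hp
      rw [← Polynomial.coeff_natDegree] at hlc
      simpa only [ne_eq, decide_eq_true_eq] using hlc
    exact List.ne_nil_of_mem h2
  obtain ⟨s, hsub, hchain, _, _, hlen⟩ := scl_exists_alt w hw hwne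
  have hsubL : s.Sublist L := hsub.trans (List.filter_sublist (l := L))
  obtain ⟨js, hjs, rfl⟩ := List.sublist_map_iff.mp hsubL
  have hnz : ∀ j ∈ js, p.coeff j ≠ 0 := by
    intro j hj
    exact hw _ (hsub.subset (List.mem_map.mpr ⟨j, hj, rfl⟩))
  refine ⟨js, ?_, hnz, hchain, by rw [signChanges]; simpa only [List.length_map] using hlen⟩
  rw [List.Chain', List.isChain_iff_pairwise]
  exact List.Pairwise.sublist hjs (by rw [List.pairwise_reverse]; exact List.pairwise_lt_range (n := n+1))

end Bridge


lemma coeff_XsubC_mul_zero (f : ℝ[X]) (r : ℝ) :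
    ((X - C r) * f).coeff 0 = -r * f.coeff 0 := by
  rw [Polynomial.mul_coeff_zero]
  simp

lemma coeff_XsubC_mul_succ (f : ℝ[X]) (r : ℝ) (t : ℕ) :
    ((X - C r) * f).coeff (t + 1) = f.coeff t - r * f.coeff (t + 1) := by
  rw [sub_mul, Polynomial.coeff_sub, Polynomial.coeff_X_mul, Polynomial.coeff_C_mul]

lemma sum_XsubC_mul (f : ℝ[X]) (r : ℝ) :
    ∀ j : ℕ, ∑ t ∈ Finset.range (j + 1), ((X - C r) * f).coeff t * r ^ t
      = -r * (f.coeff j * r ^ j)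
  | 0 => by simp [coeff_XsubC_mul_zero]
  | j + 1 => by
      rw [Finset.sum_range_succ, sum_XsubC_mul f r j, coeff_XsubC_mul_succ]
      ring

lemma exists_pos_term {F : Finset ℕ} {g : ℕ → ℝ} (h : 0 < ∑ t ∈ F, g t) :
    ∃ t ∈ F, 0 < g t := by
  by_contra hc
  push_neg at hc
  exact absurd (Finset.sum_nonpos hc) (by linarith)

lemma L1_aux (f : ℝ[X]) (r : ℝ) (hr : 0 < r) :
    ∀ (rest : List ℕ) (j : ℕ),
      ((j :: rest).Chain' (· > ·)) →
      (∀ i ∈ j :: rest, f.coeff i ≠ 0) →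
      (((j :: rest).map f.coeff).Chain' (fun x y => x * y < 0)) →
      ∃ (k : ℕ) (ktail : List ℕ),
        (k :: ktail).length = (j :: rest).length ∧
        ((k :: ktail).Chain' (· > ·)) ∧
        k ≤ j ∧
        (∀ i ∈ k :: ktail, ((X - C r) * f).coeff i ≠ 0) ∧
        (((k :: ktail).map ((X - C r) * f).coeff).Chain' (fun x y => x * y < 0)) ∧
        ((X - C r) * f).coeff k * f.coeff j < 0
  | [], j => by
      intro _ hnz _
      have hfj : f.coeff j ≠ 0 := hnz j (by simp)
      have h2 : 0 < ∑ t ∈ Finset.range (j + 1),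
          ((X - C r) * f).coeff t * r ^ t * (-(f.coeff j)) := by
        rw [← Finset.sum_mul, sum_XsubC_mul f r j]
        have key : 0 < r * (f.coeff j * f.coeff j) * r ^ j :=
          mul_pos (mul_pos hr (mul_self_pos.mpr hfj)) (pow_pos hr j)
        nlinarith [key]
      obtain ⟨t, ht, hpos⟩ := exists_pos_term h2
      have htj : t ≤ j := by have := Finset.mem_range.mp ht; omega
      have hbt : ((X - C r) * f).coeff t * f.coeff j < 0 := by
        nlinarith [pow_pos hr t]
      refine ⟨t, [], rfl, List.isChain_singleton t, htj, ?_, List.isChain_singleton _, hbt⟩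
      intro i hi
      simp only [List.mem_singleton] at hi
      subst hi
      intro h0
      rw [h0] at hbt
      simp at hbt
  | j' :: rest2, j => by
      intro hdec hnz halt
      have hjj' : j > j' := (List.isChain_cons_cons.mp hdec).1
      have hfj : f.coeff j ≠ 0 := hnz j (by simp)
      have hfj' : f.coeff j' ≠ 0 := hnz j' (by simp)
      have halt2 : f.coeff j * f.coeff j' < 0 ∧
          List.Chain' (fun x y => x * y < 0) (f.coeff j' :: List.map f.coeff rest2) := by
        rw [List.map_cons, List.map_cons, List.Chain', List.isChain_cons_cons] at halt
        exact halt
      have haltH : f.coeff j * f.coeff j' < 0 := halt2.1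
      obtain ⟨k', ktail', hlen', hdec', hle', hnz', halt', hhead'⟩ :=
        L1_aux f r hr rest2 j' (List.isChain_cons_cons.mp hdec).2
          (fun i hi => hnz i (by simp [hi]))
          (by rw [List.map_cons]; exact halt2.2)
      -- gap witness
      have hIco : ∑ t ∈ Finset.Ico (j' + 1) (j + 1), ((X - C r) * f).coeff t * r ^ t
          = -r * (f.coeff j * r ^ j) - -r * (f.coeff j' * r ^ j') := by
        rw [Finset.sum_Ico_eq_sub _ (by omega : j' + 1 ≤ j + 1)]
        rw [sum_XsubC_mul f r j, sum_XsubC_mul f r j']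
      have h2 : 0 < ∑ t ∈ Finset.Ico (j' + 1) (j + 1),
          ((X - C r) * f).coeff t * r ^ t * f.coeff j' := by
        rw [← Finset.sum_mul, hIco]
        have key1 : 0 < r * (f.coeff j' * f.coeff j') * r ^ j' :=
          mul_pos (mul_pos hr (mul_self_pos.mpr hfj')) (pow_pos hr j')
        have key2 : 0 < r * (-(f.coeff j * f.coeff j')) * r ^ j :=
          mul_pos (mul_pos hr (neg_pos.mpr haltH)) (pow_pos hr j)
        nlinarith [key1, key2]
      obtain ⟨t, ht, hpos⟩ := exists_pos_term h2
      obtain ⟨ht1, ht2⟩ := Finset.mem_Ico.mp ht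
      have hbt : 0 < ((X - C r) * f).coeff t * f.coeff j' := by
        nlinarith [pow_pos hr t]
      have hbtnz : ((X - C r) * f).coeff t ≠ 0 := by
        intro h0; rw [h0] at hbt; simp at hbt
      refine ⟨t, k' :: ktail', by simpa using hlen', ?_, by omega, ?_, ?_, ?_⟩
      · exact List.isChain_cons_cons.mpr ⟨by omega, hdec'⟩
      · intro i hi
        rcases List.mem_cons.mp hi with h | h
        · subst h; exact hbtnz
        · exact hnz' i h
      · rw [List.map_cons, List.map_cons, List.Chain', List.isChain_cons_cons]
        refine ⟨?_, by rw [List.map_cons] at halt'; exact halt'⟩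
        have : f.coeff j' * ((X - C r) * f).coeff k' < 0 := by linarith [mul_comm (((X - C r) * f).coeff k') (f.coeff j'), hhead']
        exact sgn_helper1 (by linarith [mul_comm (((X - C r) * f).coeff t) (f.coeff j')]) this
      · have h3 : f.coeff j' * f.coeff j < 0 := by linarith [mul_comm (f.coeff j) (f.coeff j')]
        exact sgn_helper1 (by linarith [mul_comm (((X - C r) * f).coeff t) (f.coeff j')]) h3

lemma signChanges_XsubC_mul (f : ℝ[X]) (hf : f ≠ 0) (r : ℝ) (hr : 0 < r) :
    signChanges f + 1 ≤ signChanges ((X - C r) * f) := by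
  obtain ⟨js, hdec, hnz, halt, hlen⟩ := exists_alt_indices f hf
  cases js with
  | nil => simp at hlen
  | cons j rest =>
    have hfj : f.coeff j ≠ 0 := hnz j (by simp)
    obtain ⟨k, ktail, hklen, hkdec, hkle, hknz, hkalt, hkhead⟩ :=
      L1_aux f r hr rest j hdec hnz halt
    set U := f.natDegree + 1 + j with hU
    have hcoeffU : f.coeff U = 0 := Polynomial.coeff_eq_zero_of_natDegree_lt (by omega)
    have hIco : ∑ t ∈ Finset.Ico (j + 1) (U + 1), ((X - C r) * f).coeff t * r ^ t
        = -r * (f.coeff U * r ^ U) - -r * (f.coeff j * r ^ j) := by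
      rw [Finset.sum_Ico_eq_sub _ (by omega : j + 1 ≤ U + 1)]
      rw [sum_XsubC_mul f r U, sum_XsubC_mul f r j]
    have h2 : 0 < ∑ t ∈ Finset.Ico (j + 1) (U + 1),
        ((X - C r) * f).coeff t * r ^ t * f.coeff j := by
      rw [← Finset.sum_mul, hIco, hcoeffU]
      have key : 0 < r * (f.coeff j * f.coeff j) * r ^ j :=
        mul_pos (mul_pos hr (mul_self_pos.mpr hfj)) (pow_pos hr j)
      nlinarith [key]
    obtain ⟨T, hT, hpos⟩ := exists_pos_term h2
    obtain ⟨hT1, _⟩ := Finset.mem_Ico.mp hT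
    have hbT : 0 < ((X - C r) * f).coeff T * f.coeff j := by
      nlinarith [pow_pos hr T]
    have hbTnz : ((X - C r) * f).coeff T ≠ 0 := by
      intro h0; rw [h0] at hbT; simp at hbT
    have hfinal := length_le_signChanges ((X - C r) * f) (T :: k :: ktail)
      (List.isChain_cons_cons.mpr ⟨by omega, hkdec⟩)
      (by
        intro i hi
        rcases List.mem_cons.mp hi with h | h
        · subst h; exact hbTnz
        · exact hknz i h)
      (by
        rw [List.map_cons, List.map_cons, List.Chain', List.isChain_cons_cons]
        rw [List.map_cons] at hkalt
        refine ⟨?_, hkalt⟩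
        have h3 : f.coeff j * ((X - C r) * f).coeff k < 0 := by
          linarith [mul_comm (((X - C r) * f).coeff k) (f.coeff j), hkhead]
        exact sgn_helper1 (by linarith [mul_comm (((X - C r) * f).coeff T) (f.coeff j)]) h3)
    simp only [List.length_cons] at hfinal hklen hlen
    omega


lemma coeff_XaddC_mul_zero (f : ℝ[X]) (c : ℝ) :
    ((X + C c) * f).coeff 0 = c * f.coeff 0 := by
  rw [Polynomial.mul_coeff_zero]
  simp

lemma coeff_XaddC_mul_succ (f : ℝ[X]) (c : ℝ) (t : ℕ) :
    ((X + C c) * f).coeff (t + 1) = f.coeff t + c * f.coeff (t + 1) := by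
  rw [add_mul, Polynomial.coeff_add, Polynomial.coeff_X_mul, Polynomial.coeff_C_mul]

lemma L2_witness (f : ℝ[X]) (c : ℝ) (hc : 0 ≤ c) (t : ℕ)
    (hbt : ((X + C c) * f).coeff t ≠ 0) :
    ∃ w : ℕ, w ≤ t ∧ t ≤ w + 1 ∧ 0 < f.coeff w * ((X + C c) * f).coeff t := by
  cases t with
  | zero =>
    refine ⟨0, le_refl 0, by omega, ?_⟩
    have heq : ((X + C c) * f).coeff 0 = c * f.coeff 0 := coeff_XaddC_mul_zero f c
    have hsq := mul_self_pos.mpr hbt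
    by_contra h
    push_neg at h
    have hbb : ((X + C c) * f).coeff 0 * ((X + C c) * f).coeff 0
        = c * (f.coeff 0 * ((X + C c) * f).coeff 0) := by
      nth_rewrite 2 [heq]
      ring
    nlinarith [mul_nonneg hc (neg_nonneg.mpr h), hbb]
  | succ s =>
    have heq : ((X + C c) * f).coeff (s + 1) = f.coeff s + c * f.coeff (s + 1) :=
      coeff_XaddC_mul_succ f c s
    by_cases h : 0 < f.coeff s * ((X + C c) * f).coeff (s + 1)
    · exact ⟨s, by omega, by omega, h⟩
    · refine ⟨s + 1, le_refl _, by omega, ?_⟩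
      push_neg at h
      have hsq := mul_self_pos.mpr hbt
      have hbb : ((X + C c) * f).coeff (s+1) * ((X + C c) * f).coeff (s+1)
          = f.coeff s * ((X + C c) * f).coeff (s+1)
            + c * (f.coeff (s+1) * ((X + C c) * f).coeff (s+1)) := by
        nth_rewrite 2 [heq]
        ring
      by_contra h2
      push_neg at h2
      nlinarith [mul_nonneg hc (neg_nonneg.mpr h2)]

lemma L2_aux (f : ℝ[X]) (c : ℝ) (hc : 0 ≤ c) :
    ∀ (rest : List ℕ) (t : ℕ),
      ((t :: rest).Chain' (· > ·)) →
      (∀ i ∈ t :: rest, ((X + C c) * f).coeff i ≠ 0) →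
      (((t :: rest).map ((X + C c) * f).coeff).Chain' (fun x y => x * y < 0)) →
      ∃ (w : ℕ) (ws : List ℕ),
        (w :: ws).length = (t :: rest).length ∧
        ((w :: ws).Chain' (· > ·)) ∧
        w ≤ t ∧ t ≤ w + 1 ∧
        (∀ i ∈ w :: ws, f.coeff i ≠ 0) ∧
        (((w :: ws).map f.coeff).Chain' (fun x y => x * y < 0)) ∧
        0 < f.coeff w * ((X + C c) * f).coeff t
  | [], t => by
      intro _ hnz _
      obtain ⟨w, hw1, hw2, hw3⟩ := L2_witness f c hc t (hnz t (by simp))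
      refine ⟨w, [], rfl, List.isChain_singleton w, hw1, hw2, ?_, List.isChain_singleton _, hw3⟩
      intro i hi
      simp only [List.mem_singleton] at hi
      subst hi
      intro h0
      rw [h0] at hw3
      simp at hw3
  | t' :: rest2, t => by
      intro hdec hnz halt
      have htt' : t > t' := (List.isChain_cons_cons.mp hdec).1
      have halt2 : ((X + C c) * f).coeff t * ((X + C c) * f).coeff t' < 0 ∧
          List.Chain' (fun x y => x * y < 0)
            (((X + C c) * f).coeff t' :: List.map ((X + C c) * f).coeff rest2) := by
        rw [List.map_cons, List.map_cons, List.Chain', List.isChain_cons_cons] at halt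
        exact halt
      obtain ⟨w', ws', hlen', hdec', hle', ht'le, hnz', halt', hhead'⟩ :=
        L2_aux f c hc rest2 t' (List.isChain_cons_cons.mp hdec).2
          (fun i hi => hnz i (by simp [hi]))
          (by rw [List.map_cons]; exact halt2.2)
      obtain ⟨w, hw1, hw2, hw3⟩ := L2_witness f c hc t (hnz t (by simp))
      -- f.coeff w * f.coeff w' < 0
      have hcomm0 : 0 < ((X + C c) * f).coeff t * f.coeff w := by
        linarith [mul_comm (f.coeff w) (((X + C c) * f).coeff t)]
      have hs1 : f.coeff w * ((X + C c) * f).coeff t' < 0 := sgn_helper1 hcomm0 halt2.1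
      have hcomm1 : 0 < ((X + C c) * f).coeff t' * f.coeff w' := by
        linarith [mul_comm (f.coeff w') (((X + C c) * f).coeff t')]
      have hcomm2 : ((X + C c) * f).coeff t' * f.coeff w < 0 := by
        linarith [mul_comm (f.coeff w) (((X + C c) * f).coeff t')]
      have hs2 : f.coeff w' * f.coeff w < 0 := sgn_helper1 hcomm1 hcomm2
      have hww' : f.coeff w * f.coeff w' < 0 := by linarith [mul_comm (f.coeff w') (f.coeff w)]
      have hwne : w ≠ w' := by
        intro h
        rw [h] at hww'
        nlinarith [mul_self_nonneg (f.coeff w')]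
      have hwgt : w > w' := by omega
      refine ⟨w, w' :: ws', by simpa using hlen', List.isChain_cons_cons.mpr ⟨hwgt, hdec'⟩,
        hw1, hw2, ?_, ?_, hw3⟩
      · intro i hi
        rcases List.mem_cons.mp hi with h | h
        · subst h
          intro h0; rw [h0] at hww'; simp at hww'
        · exact hnz' i h
      · rw [List.map_cons, List.map_cons, List.Chain', List.isChain_cons_cons]
        rw [List.map_cons] at halt'
        exact ⟨hww', halt'⟩

lemma signChanges_XaddC_mul (f : ℝ[X]) (hf : f ≠ 0) (c : ℝ) (hc : 0 ≤ c) :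
    signChanges ((X + C c) * f) ≤ signChanges f := by
  have hb : (X + C c) * f ≠ 0 := mul_ne_zero (Polynomial.monic_X_add_C c).ne_zero hf
  obtain ⟨js, hdec, hnz, halt, hlen⟩ := exists_alt_indices ((X + C c) * f) hb
  cases js with
  | nil => simp at hlen
  | cons t rest =>
    obtain ⟨w, ws, hwlen, hwdec, _, _, hwnz, hwalt, _⟩ :=
      L2_aux f c hc rest t hdec hnz halt
    have := length_le_signChanges f (w :: ws) hwdec hwnz hwalt
    simp only [List.length_cons] at this hwlen hlen
    omega

end Aux

lemma signChanges_le_natDegree (p : Polynomial ℝ) : signChanges p ≤ p.natDegree := by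
  have h1 := scl_le_length ((((List.range (p.natDegree + 1)).reverse).map p.coeff).filter
    (fun x => x ≠ 0))
  have h2 : ((((List.range (p.natDegree + 1)).reverse).map p.coeff).filter
      (fun x => x ≠ 0)).length ≤ p.natDegree + 1 := by
    calc _ ≤ (((List.range (p.natDegree + 1)).reverse).map p.coeff).length :=
          List.length_filter_le _ _
      _ = p.natDegree + 1 := by simp
  rw [signChanges]
  omega

lemma monic_prod_XsubC (M : Multiset ℝ) : ((M.map (fun r => X - C r)).prod).Monic :=
  Polynomial.monic_multiset_prod_of_monic _ _ (fun a _ => Polynomial.monic_X_sub_C a)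

lemma sc_lower (P : Multiset ℝ) (hP : ∀ r ∈ P, (0:ℝ) < r) (g : ℝ[X]) (hg : g ≠ 0) :
    signChanges g + Multiset.card P ≤ signChanges ((P.map (fun r => X - C r)).prod * g) := by
  induction P using Multiset.induction_on with
  | empty => simp
  | cons a P ih =>
    have ha : (0:ℝ) < a := hP a (Multiset.mem_cons_self a P)
    have hPs : ∀ r ∈ P, (0:ℝ) < r := fun r hr => hP r (Multiset.mem_cons_of_mem hr)
    have hne : (P.map (fun r => X - C r)).prod * g ≠ 0 :=
      mul_ne_zero (monic_prod_XsubC P).ne_zero hg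
    have step := signChanges_XsubC_mul ((P.map (fun r => X - C r)).prod * g) hne a ha
    have heq : ((a ::ₘ P).map (fun r => X - C r)).prod * g
        = (X - C a) * ((P.map (fun r => X - C r)).prod * g) := by
      rw [Multiset.map_cons, Multiset.prod_cons]
      ring
    rw [heq, Multiset.card_cons]
    have := ih hPs
    omega

lemma sc_upper (N : Multiset ℝ) (hN : ∀ r ∈ N, r ≤ (0:ℝ)) (g : ℝ[X]) (hg : g ≠ 0) :
    signChanges ((N.map (fun r => X - C r)).prod * g) ≤ signChanges g := by
  induction N using Multiset.induction_on with
  | empty => simp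
  | cons a N ih =>
    have ha : (0:ℝ) ≤ -a := by have := hN a (Multiset.mem_cons_self a N); linarith
    have hNs : ∀ r ∈ N, r ≤ (0:ℝ) := fun r hr => hN r (Multiset.mem_cons_of_mem hr)
    have hne : (N.map (fun r => X - C r)).prod * g ≠ 0 :=
      mul_ne_zero (monic_prod_XsubC N).ne_zero hg
    have step := signChanges_XaddC_mul ((N.map (fun r => X - C r)).prod * g) hne (-a) ha
    have heq : ((a ::ₘ N).map (fun r => X - C r)).prod * g
        = (X + C (-a)) * ((N.map (fun r => X - C r)).prod * g) := by
      rw [Multiset.map_cons, Multiset.prod_cons, map_neg]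
      ring
    rw [heq]
    exact le_trans step (ih hNs)

theorem stmt8 (p : Polynomial ℝ) (hp : p ≠ 0)
    (hsplit : (p.map (RingHom.id ℝ)).Splits) :
    signChanges p = Multiset.card (p.roots.filter (fun x => 0 < x)) := by
  have ha : p.leadingCoeff ≠ 0 := Polynomial.leadingCoeff_ne_zero.mpr hp
  have heq := (by simpa only [Polynomial.map_id] using hsplit : p.Splits).eq_prod_roots
  set R := p.roots with hR
  set P := R.filter (fun x => (0:ℝ) < x) with hPdef
  set N := R.filter (fun x => ¬ (0:ℝ) < x) with hNdef
  have hPN : P + N = R := Multiset.filter_add_not _ R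
  have hprod : (R.map (fun r => X - C r)).prod
      = (P.map (fun r => X - C r)).prod * (N.map (fun r => X - C r)).prod := by
    rw [← hPN, Multiset.map_add, Multiset.prod_add]
  have hPpos : ∀ r ∈ P, (0:ℝ) < r := fun r hr => (Multiset.mem_filter.mp hr).2
  have hNnonpos : ∀ r ∈ N, r ≤ (0:ℝ) := fun r hr => by
    have := (Multiset.mem_filter.mp hr).2; linarith [not_lt.mp this]
  -- lower bound
  have hg0 : (N.map (fun r => X - C r)).prod * C p.leadingCoeff ≠ 0 :=
    mul_ne_zero (monic_prod_XsubC N).ne_zero (by simpa using ha)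
  have hlow : Multiset.card P ≤ signChanges p := by
    have h1 : p = (P.map (fun r => X - C r)).prod
        * ((N.map (fun r => X - C r)).prod * C p.leadingCoeff) := by
      conv_lhs => rw [heq, hprod]
      ring
    have := sc_lower P hPpos _ hg0
    rw [← h1] at this
    omega
  -- upper bound
  have hg1 : (P.map (fun r => X - C r)).prod * C p.leadingCoeff ≠ 0 :=
    mul_ne_zero (monic_prod_XsubC P).ne_zero (by simpa using ha)
  have hup : signChanges p ≤ Multiset.card P := by
    have h1 : p = (N.map (fun r => X - C r)).prod
        * ((P.map (fun r => X - C r)).prod * C p.leadingCoeff) := by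
      conv_lhs => rw [heq, hprod]
      ring
    have h2 := sc_upper N hNnonpos _ hg1
    rw [← h1] at h2
    have h3 := signChanges_le_natDegree ((P.map (fun r => X - C r)).prod * C p.leadingCoeff)
    have h4 : ((P.map (fun r => X - C r)).prod * C p.leadingCoeff).natDegree
        = Multiset.card P := by
      rw [Polynomial.natDegree_mul (monic_prod_XsubC P).ne_zero (by simpa using ha),
        Polynomial.natDegree_C, Polynomial.natDegree_multiset_prod_X_sub_C_eq_card]
      omega
    omega
  omega
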